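/- If a connected graph G has a digitally convex 2-partition, then G has diameter at least 3. -/

import Mathlib

def closedNbhd {V : Type*} (G : SimpleGraph V) (S : Set V) : Set V :=
  {u | ∃ s ∈ S, u = s ∨ G.Adj u s}

def digitallyConvex {V : Type*} (G : SimpleGraph V) (S : Set V) : Prop :=
  ∀ v, closedNbhd G {v} ⊆ closedNbhd G S → v ∈ S

theorem stmt_7 {V : Type*} [Fintype V] (G : SimpleGraph V) (hG : G.Connected)
    (V₁ V₂ : Set V)
    (h₁ : digitallyConvex G V₁) (h₂ : digitallyConvex G V₂)
    (hp₁ : V₁ ≠ Set.univ) (hp₂ : V₂ ≠ Set.univ)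
    (hdisj : Disjoint V₁ V₂) (hunion : V₁ ∪ V₂ = Set.univ) :
    ∃ u v : V, 3 ≤ G.dist u v := by
  obtain ⟨a, ha⟩ := (Set.ne_univ_iff_exists_notMem V₁).mp hp₁
  obtain ⟨b, hb⟩ := (Set.ne_univ_iff_exists_notMem V₂).mp hp₂
  have hw : ∃ w, w ∉ closedNbhd G V₁ := by
    by_contra h; push_neg at h
    exact ha (h₁ a (fun u _ => h u))
  have hx : ∃ x, x ∉ closedNbhd G V₂ := by
    by_contra h; push_neg at h
    exact hb (h₂ b (fun u _ => h u))
  obtain ⟨w, hw⟩ := hw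
  obtain ⟨x, hx⟩ := hx
  have hwV₂ : w ∈ V₂ := by
    have := Set.eq_univ_iff_forall.mp hunion w
    rcases this with h | h
    · exact absurd ⟨w, h, Or.inl rfl⟩ hw
    · exact h
  have hxV₁ : x ∈ V₁ := by
    have := Set.eq_univ_iff_forall.mp hunion x
    rcases this with h | h
    · exact h
    · exact absurd ⟨x, h, Or.inl rfl⟩ hx
  refine ⟨w, x, ?_⟩
  by_contra hlt
  push_neg at hlt
  obtain ⟨p, hp⟩ := (hG w x).exists_walk_length_eq_dist
  have hlen : p.length ≤ 2 := by omega
  cases p with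
  | nil =>
      exact Set.disjoint_left.mp hdisj hxV₁ hwV₂
  | cons h q =>
      cases q with
      | nil =>
          exact hw ⟨x, hxV₁, Or.inr h⟩
      | cons h' r =>
          rename_i y z
          have hr0 : r.length = 0 := by
            simp [SimpleGraph.Walk.length_cons] at hlen
            exact SimpleGraph.Walk.nil_iff_length_eq.mp hlen
          have hrz : z = x := r.eq_of_length_eq_zero hr0
          subst hrz
          rcases Set.eq_univ_iff_forall.mp hunion y with hy | hy
          · exact hw ⟨y, hy, Or.inr h⟩
          · exact hx ⟨y, hy, Or.inr h'.symm⟩
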